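/- Let ω ∈ ℝⁿ be a frequency vector and K ≥ 1 an integer, and suppose Ω := max_{0 < |k| ≤ K} |⟨k, ω⟩|^{−1} < ∞. Let f = ∑_{0 < |k| ≤ K} f_k e_k be a trigonometric polynomial of order K with zero mean. Then the unique zero-mean solution φ = Lf = ∑_{0<|k|≤K} (f_k/(i⟨k,ω⟩)) e_k of the equation ∂_ω φ = f satisfies ‖Lf‖_s ≤ 2^{n+1} e^{sK} Ω ⫴f⫴_s. -/

import Mathlib

open scoped BigOperators

noncomputable section

/-- ℓ¹-norm of an integer vector. -/
def l1 {n : ℕ} (k : Fin n → ℤ) : ℝ := ∑ i, |(k i : ℝ)|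

/-- sinh x / x, extended by 1 at x = 0. -/
def sr (x : ℝ) : ℝ := if x = 0 then 1 else Real.sinh x / x

/-- The weight w_k(t) = ∏ i, sinh (t k i) / (t k i). -/
def wt {n : ℕ} (t : ℝ) (k : Fin n → ℤ) : ℝ := ∏ i, sr (t * (k i : ℝ))

/-- Wiener (analytic) norm of a Fourier coefficient family. -/
def wiener {n : ℕ} (c : (Fin n → ℤ) → ℂ) (s : ℝ) : ℝ :=
  ∑' k, ‖c k‖ * Real.exp (s * l1 k)

/-- Strip-averaged L² norm of a Fourier coefficient family. -/
def stripL2 {n : ℕ} (c : (Fin n → ℤ) → ℂ) (s : ℝ) : ℝ :=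
  Real.sqrt (∑' k, ‖c k‖ ^ 2 * wt (2 * s) k)

open MeasureTheory
open scoped ENNReal

abbrev Esp (n : ℕ) := PiLp 1 (fun _ : Fin n => ℝ)

noncomputable instance (n : ℕ) : MeasureSpace (Esp n) := ⟨Measure.addHaar⟩
instance (n : ℕ) : BorelSpace (Esp n) := inferInstanceAs (BorelSpace (PiLp 1 (fun _ : Fin n => ℝ)))
instance (n : ℕ) : (volume : Measure (Esp n)).IsAddHaarMeasure :=
  show (Measure.addHaar : Measure (Esp n)).IsAddHaarMeasure from inferInstance

def emb {n : ℕ} (k : Fin n → ℤ) : Esp n := WithLp.toLp 1 (fun i => (k i : ℝ))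

lemma norm_emb {n : ℕ} (k : Fin n → ℤ) : ‖emb k‖ = l1 k := by
  rw [PiLp.norm_eq_sum (by norm_num : (0:ℝ) < (1 : ℝ≥0∞).toReal)]
  simp [emb, l1, Real.norm_eq_abs]

lemma emb_sub {n : ℕ} (k k' : Fin n → ℤ) : emb k - emb k' = emb (k - k') := by
  ext i; simp [emb]

lemma finrank_Esp (n : ℕ) : Module.finrank ℝ (Esp n) = n := by
  have : Module.finrank ℝ (Fin n → ℝ) = n := by simp
  exact (WithLp.linearEquiv 1 ℝ (Fin n → ℝ)).finrank_eq.trans this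

lemma packing_card {n Kn : ℕ} (T : Finset (Fin n → ℤ))
    (hT : ∀ k ∈ T, l1 k ≤ Kn)
    (hsep : ∀ k ∈ T, ∀ k' ∈ T, k ≠ k' → (Kn:ℝ) + 1 ≤ l1 (k - k')) :
    (T.card : ℝ) ≤ 3 ^ n := by
  rcases Nat.eq_zero_or_pos n with hn | hn
  · subst hn
    have h1 : T.card ≤ 1 := Finset.card_le_one.2 (fun a _ b _ => Subsingleton.elim a b)
    calc (T.card : ℝ) ≤ 1 := by exact_mod_cast h1
    _ ≤ 3 ^ 0 := by norm_num
  · have : Nontrivial (Esp n) :=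
      ⟨⟨0, WithLp.toLp 1 (fun _ => 1), fun h => by simpa using congrFun (congrArg WithLp.ofLp h) ⟨0, hn⟩⟩⟩
    set r : ℝ := ((Kn:ℝ) + 1)/2 with hr
    have hrpos : 0 < r := by positivity
    set R : ℝ := (Kn : ℝ) + r with hR
    have hRpos : 0 ≤ R := by positivity
    have hdisj : (T : Set (Fin n → ℤ)).PairwiseDisjoint (fun k => Metric.ball (emb k) r) := by
      intro k hk k' hk' hne
      refine Metric.ball_disjoint_ball ?_
      have h2 := hsep k hk k' hk' hne
      rw [dist_eq_norm, emb_sub, norm_emb]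
      linarith
    have hsub : ∀ k ∈ T, Metric.ball (emb k) r ⊆ Metric.ball (0 : Esp n) R := by
      intro k hk x hx
      have h1 : dist x (emb k) < r := Metric.mem_ball.1 hx
      have h2 : ‖emb k‖ ≤ (Kn : ℝ) := by rw [norm_emb]; exact hT k hk
      refine Metric.mem_ball.2 ?_
      calc dist x 0 ≤ dist x (emb k) + dist (emb k) 0 := dist_triangle _ _ _
      _ < r + (Kn:ℝ) := by rw [dist_zero_right]; linarith
      _ = R := by rw [hR]; ring
    have hmeas : volume (⋃ k ∈ T, Metric.ball (emb k) r) = ∑ k ∈ T, volume (Metric.ball (emb k) r) :=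
      measure_biUnion_finset hdisj (fun k _ => measurableSet_ball)
    have hball : ∀ k : Fin n → ℤ, volume (Metric.ball (emb k) r)
        = ENNReal.ofReal (r ^ n) * volume (Metric.ball (0 : Esp n) 1) := by
      intro k
      rw [Measure.addHaar_ball volume (emb k) hrpos.le, finrank_Esp]
    have hbig : volume (Metric.ball (0 : Esp n) R)
        = ENNReal.ofReal (R ^ n) * volume (Metric.ball (0 : Esp n) 1) := by
      rw [Measure.addHaar_ball volume _ hRpos, finrank_Esp]
    have hle : (T.card : ℝ≥0∞) * (ENNReal.ofReal (r ^ n) * volume (Metric.ball (0 : Esp n) 1))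
        ≤ ENNReal.ofReal (R ^ n) * volume (Metric.ball (0 : Esp n) 1) := by
      rw [← hbig]
      calc (T.card : ℝ≥0∞) * (ENNReal.ofReal (r ^ n) * volume (Metric.ball (0 : Esp n) 1))
          = ∑ k ∈ T, volume (Metric.ball (emb k) r) := by
            rw [Finset.sum_congr rfl (fun k _ => hball k), Finset.sum_const, nsmul_eq_mul]
        _ = volume (⋃ k ∈ T, Metric.ball (emb k) r) := hmeas.symm
        _ ≤ volume (Metric.ball (0 : Esp n) R) := measure_mono (Set.iUnion₂_subset hsub)
    have hv0 : volume (Metric.ball (0 : Esp n) 1) ≠ 0 := (Metric.measure_ball_pos volume _ one_pos).ne'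
    have hvt : volume (Metric.ball (0 : Esp n) 1) ≠ ⊤ := measure_ball_lt_top.ne
    have hle2 : (T.card : ℝ≥0∞) * ENNReal.ofReal (r ^ n) ≤ ENNReal.ofReal (R ^ n) := by
      rw [← mul_assoc] at hle
      exact (ENNReal.mul_le_mul_iff_left hv0 hvt).1 hle
    have hle3 : (T.card : ℝ) * r ^ n ≤ R ^ n := by
      have h3 := ENNReal.toReal_mono (by finiteness) hle2
      rw [ENNReal.toReal_mul, ENNReal.toReal_ofReal (by positivity), ENNReal.toReal_ofReal (by positivity)] at h3
      simpa using h3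
    have hRr : R ^ n ≤ 3 ^ n * r ^ n := by
      have h1 : R ≤ 3 * r := by rw [hR, hr]; ring_nf; linarith
      calc R ^ n ≤ (3*r) ^ n := pow_le_pow_left₀ hRpos h1 n
      _ = 3 ^ n * r ^ n := mul_pow 3 r n
    exact le_of_mul_le_mul_right (le_trans hle3 hRr) (by positivity)


lemma l1_nonneg {n : ℕ} (k : Fin n → ℤ) : 0 ≤ l1 k :=
  Finset.sum_nonneg fun i _ => abs_nonneg _

lemma l1_natCast {n : ℕ} (k : Fin n → ℤ) : l1 k = ((∑ i, (k i).natAbs : ℕ) : ℝ) := by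
  unfold l1
  push_cast
  exact Finset.sum_congr rfl fun i _ => by
    rw [Nat.cast_natAbs]; norm_cast

lemma l1_pos_of_ne {n : ℕ} {k : Fin n → ℤ} (h : k ≠ 0) : 0 < l1 k := by
  rcases lt_or_eq_of_le (l1_nonneg k) with h1 | h1
  · exact h1
  · exfalso; apply h
    funext i
    have h2 : ∀ j ∈ Finset.univ, |((k j : ℝ))| = 0 := by
      intro j _
      by_contra hne
      have hlt : 0 < |((k j : ℝ))| := lt_of_le_of_ne (abs_nonneg _) (Ne.symm hne)
      have : 0 < l1 k := by
        unfold l1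
        exact Finset.sum_pos' (fun i _ => abs_nonneg _) ⟨j, Finset.mem_univ j, hlt⟩
      linarith
    have := h2 i (Finset.mem_univ i)
    simpa using this
  
lemma l1_int_gap {n : ℕ} {K : ℕ} {k : Fin n → ℤ} (h : (K : ℝ) < l1 k) : (K:ℝ) + 1 ≤ l1 k := by
  rw [l1_natCast] at h ⊢
  have : K < ∑ i, (k i).natAbs := by exact_mod_cast h
  have : K + 1 ≤ ∑ i, (k i).natAbs := this
  exact_mod_cast this


lemma telescope_eq (M : ℕ) : ∑ m ∈ Finset.Icc 1 M, (((m:ℝ))⁻¹ - ((m:ℝ)+1)⁻¹) = 1 - ((M:ℝ)+1)⁻¹ := by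
  induction M with
  | zero => simp
  | succ M ih =>
    rw [Finset.sum_Icc_succ_top (by omega : 1 ≤ M + 1), ih]
    push_cast
    ring


def dd {n : ℕ} (ω : Fin n → ℝ) (k : Fin n → ℤ) : ℝ := ∑ i, (k i : ℝ) * ω i

lemma dd_sub {n : ℕ} (ω : Fin n → ℝ) (k k' : Fin n → ℤ) :
    dd ω (k - k') = dd ω k - dd ω k' := by
  unfold dd
  rw [← Finset.sum_sub_distrib]
  refine Finset.sum_congr rfl fun i _ => ?_
  simp only [Pi.sub_apply]
  push_cast
  ring


lemma russmann {n K : ℕ} {ω : Fin n → ℝ} {Ω : ℝ}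
    (hres : ∀ k : Fin n → ℤ, 0 < l1 k → l1 k ≤ K → dd ω k ≠ 0)
    (hΩ : ∀ k : Fin n → ℤ, 0 < l1 k → l1 k ≤ K → |dd ω k|⁻¹ ≤ Ω)
    (A : Finset (Fin n → ℤ)) (hA : ∀ k ∈ A, 0 < l1 k ∧ l1 k ≤ K) :
    ∑ k ∈ A, (|dd ω k| ^ 2)⁻¹ ≤ 4 * 3 ^ n * Ω ^ 2 := by
  rcases A.eq_empty_or_nonempty with rfl | ⟨k₀, hk₀⟩
  · simp
    positivity
  have hdne : ∀ k ∈ A, dd ω k ≠ 0 := fun k hk => hres k (hA k hk).1 (hA k hk).2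
  have habs : ∀ k ∈ A, 0 < |dd ω k| := fun k hk => abs_pos.2 (hdne k hk)
  have hΩpos : 0 < Ω :=
    lt_of_lt_of_le (inv_pos.2 (habs k₀ hk₀)) (hΩ k₀ (hA k₀ hk₀).1 (hA k₀ hk₀).2)
  set m : (Fin n → ℤ) → ℕ := fun k => ⌊|dd ω k| * Ω⌋₊ with hmdef
  have hm1 : ∀ k ∈ A, 1 ≤ m k := by
    intro k hk
    have h1 : (1:ℝ) ≤ |dd ω k| * Ω := by
      have h2 := hΩ k (hA k hk).1 (hA k hk).2
      have h3 := habs k hk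
      calc (1:ℝ) = |dd ω k| * |dd ω k|⁻¹ := by field_simp
      _ ≤ |dd ω k| * Ω := by nlinarith
    exact Nat.le_floor (by exact_mod_cast h1)
  have hlow : ∀ k ∈ A, (m k : ℝ) ≤ |dd ω k| * Ω := fun k hk => Nat.floor_le (by positivity)
  have hupp : ∀ k : Fin n → ℤ, |dd ω k| * Ω < (m k : ℝ) + 1 := fun k => Nat.lt_floor_add_one _
  -- pointwise bound
  have hpt : ∀ k ∈ A, (|dd ω k| ^ 2)⁻¹ ≤ 2 * Ω^2 * (((m k : ℝ))⁻¹ - ((m k:ℝ)+1)⁻¹) := by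
    intro k hk
    have hmr : (1:ℝ) ≤ (m k : ℝ) := by exact_mod_cast hm1 k hk
    have h3 := habs k hk
    have hlo := hlow k hk
    have e1 : ((m k : ℝ))⁻¹ - ((m k:ℝ)+1)⁻¹ = ((m k:ℝ)*((m k:ℝ)+1))⁻¹ := by
      rw [inv_eq_one_div, inv_eq_one_div, inv_eq_one_div]
      rw [div_sub_div _ _ (by linarith) (by linarith : (m k:ℝ)+1 ≠ 0)]
      ring_nf
    rw [e1]
    have h7 : (|dd ω k| ^ 2)⁻¹ ≤ 2 * Ω^2 / ((m k:ℝ)*((m k:ℝ)+1)) := by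
      rw [inv_eq_one_div, div_le_div_iff₀ (by positivity) (by positivity)]
      nlinarith [sq_nonneg (|dd ω k| * Ω - (m k:ℝ))]
    calc (|dd ω k| ^ 2)⁻¹ ≤ 2 * Ω^2 / ((m k:ℝ)*((m k:ℝ)+1)) := h7
    _ = 2 * Ω^2 * ((m k:ℝ)*((m k:ℝ)+1))⁻¹ := by rw [div_eq_mul_inv]
  -- grouping by (floor, sign)
  set ψ : (Fin n → ℤ) → ℕ × Bool := fun k => (m k, decide (0 < dd ω k)) with hψdef
  have hfiber : ∀ p : ℕ × Bool, ((A.filter (fun k => ψ k = p)).card : ℝ) ≤ 3 ^ n := by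
    intro p
    apply packing_card (Kn := K)
    · intro k hk
      exact (hA k (Finset.mem_filter.1 hk).1).2
    · intro k hk k' hk' hne
      rcases Finset.mem_filter.1 hk with ⟨hkA, hkp⟩
      rcases Finset.mem_filter.1 hk' with ⟨hk'A, hk'p⟩
      by_contra hcon
      push_neg at hcon
      have hle : l1 (k - k') ≤ (K:ℝ) := by
        by_contra h
        push_neg at h
        exact absurd (l1_int_gap h) (not_le.2 hcon)
      have hkk' : k - k' ≠ 0 := sub_ne_zero.2 hne
      have hpos : 0 < l1 (k - k') := l1_pos_of_ne hkk'
      have hd1 : |dd ω (k - k')|⁻¹ ≤ Ω := hΩ _ hpos hle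
      have hd0 : dd ω (k - k') ≠ 0 := hres _ hpos hle
      have hd2 : Ω⁻¹ ≤ |dd ω (k - k')| := by
        rw [← inv_inv (|dd ω (k - k')|)]
        exact inv_anti₀ (inv_pos.2 (abs_pos.2 hd0)) hd1
      -- same floor and same sign
      have hboth : m k = m k' ∧ decide (0 < dd ω k) = decide (0 < dd ω k') := by
        have h := hkp.trans hk'p.symm
        simpa [hψdef, Prod.ext_iff] using h
      have hsign : (0 < dd ω k) ↔ (0 < dd ω k') := by
        have := hboth.2
        simpa [decide_eq_decide] using this
      have hl1 : (m k : ℝ) ≤ |dd ω k| * Ω := hlow k hkA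
      have hl2 : (m k : ℝ) ≤ |dd ω k'| * Ω := by rw [hboth.1]; exact hlow k' hk'A
      have hu1 : |dd ω k| * Ω < (m k : ℝ) + 1 := hupp k
      have hu2 : |dd ω k'| * Ω < (m k : ℝ) + 1 := by rw [hboth.1]; exact hupp k'
      have h8 : |dd ω k - dd ω k'| < Ω⁻¹ := by
        rw [abs_sub_lt_iff, inv_eq_one_div]
        have hd1k : dd ω k ≠ 0 := hdne k hkA
        have hd1k' : dd ω k' ≠ 0 := hdne k' hk'A
        rcases lt_or_gt_of_ne hd1k with hneg | hposk
        · have hnegk' : dd ω k' < 0 := by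
            rcases lt_or_gt_of_ne hd1k' with h | h
            · exact h
            · exact absurd (hsign.2 h) (not_lt.2 hneg.le)
          rw [abs_of_neg hneg] at hl1 hu1
          rw [abs_of_neg hnegk'] at hl2 hu2
          constructor <;> rw [lt_div_iff₀ hΩpos] <;> nlinarith
        · have hposk' : 0 < dd ω k' := hsign.1 hposk
          rw [abs_of_pos hposk] at hl1 hu1
          rw [abs_of_pos hposk'] at hl2 hu2
          constructor <;> rw [lt_div_iff₀ hΩpos] <;> nlinarith
      rw [dd_sub] at hd2
      linarith [abs_nonneg (dd ω k - dd ω k')]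
  -- summation
  set g : ℕ × Bool → ℝ := fun p => 2 * Ω^2 * (((p.1:ℝ))⁻¹ - ((p.1:ℝ)+1)⁻¹) with hgdef
  have hgnonneg : ∀ p : ℕ × Bool, 1 ≤ p.1 → 0 ≤ g p := by
    intro p hp
    have h1 : (1:ℝ) ≤ (p.1 : ℝ) := by exact_mod_cast hp
    have h2 : ((p.1:ℝ)+1)⁻¹ ≤ ((p.1:ℝ))⁻¹ := by
      apply inv_anti₀ (by linarith) (by linarith)
    have : 0 ≤ ((p.1:ℝ))⁻¹ - ((p.1:ℝ)+1)⁻¹ := by linarith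
    positivity
  set M : ℕ := A.sup m with hMdef
  set t : Finset (ℕ × Bool) := (Finset.Icc 1 M) ×ˢ (Finset.univ : Finset Bool) with htdef
  have hmaps : ∀ k ∈ A, ψ k ∈ t := by
    intro k hk
    rw [htdef]
    refine Finset.mem_product.2 ⟨?_, Finset.mem_univ _⟩
    exact Finset.mem_Icc.2 ⟨hm1 k hk, Finset.le_sup (f := m) hk⟩
  calc ∑ k ∈ A, (|dd ω k| ^ 2)⁻¹
      ≤ ∑ k ∈ A, g (ψ k) := Finset.sum_le_sum (fun k hk => hpt k hk)
    _ = ∑ p ∈ t, ∑ k ∈ A.filter (fun k => ψ k = p), g p :=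
        (Finset.sum_fiberwise_of_maps_to' hmaps g).symm
    _ = ∑ p ∈ t, ((A.filter (fun k => ψ k = p)).card : ℝ) * g p := by
        refine Finset.sum_congr rfl fun p _ => ?_
        rw [Finset.sum_const, nsmul_eq_mul]
    _ ≤ ∑ p ∈ t, (3:ℝ)^n * g p := by
        refine Finset.sum_le_sum fun p hp => ?_
        have hp1 : 1 ≤ p.1 := by
          rw [htdef] at hp
          have := (Finset.mem_product.1 hp).1
          exact (Finset.mem_Icc.1 this).1
        exact mul_le_mul_of_nonneg_right (hfiber p) (hgnonneg p hp1)
    _ = (3:ℝ)^n * ∑ p ∈ t, g p := (Finset.mul_sum _ _ _).symm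
    _ = (3:ℝ)^n * (2 * (2 * Ω^2 * ∑ mm ∈ Finset.Icc 1 M, (((mm:ℝ))⁻¹ - ((mm:ℝ)+1)⁻¹))) := by
        rw [htdef, Finset.sum_product]
        congr 1
        have hb : ∀ mm ∈ Finset.Icc 1 M, ∑ b : Bool, g (mm, b)
            = 2 * (2 * Ω^2 * (((mm:ℝ))⁻¹ - ((mm:ℝ)+1)⁻¹)) := by
          intro mm _
          rw [Fintype.sum_bool]
          simp only [hgdef]
          ring
        rw [Finset.sum_congr rfl hb, ← Finset.mul_sum, ← Finset.mul_sum]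
    _ ≤ (3:ℝ)^n * (2 * (2 * Ω^2 * 1)) := by
        have htel : ∑ mm ∈ Finset.Icc 1 M, (((mm:ℝ))⁻¹ - ((mm:ℝ)+1)⁻¹) ≤ 1 := by
          rw [telescope_eq]
          have : 0 ≤ ((M:ℝ)+1)⁻¹ := by positivity
          linarith
        have hmul := mul_le_mul_of_nonneg_left htel
          (show (0:ℝ) ≤ (3:ℝ)^n * (2 * (2 * Ω^2)) by positivity)
        nlinarith [hmul]
    _ = 4 * 3 ^ n * Ω ^ 2 := by ring


lemma one_le_sr' (x : ℝ) : 1 ≤ sr x := by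
  unfold sr
  split_ifs with h
  · exact le_refl 1
  · rcases lt_or_gt_of_ne h with hneg | hpos
    · have h1 : Real.sinh x ≤ x := by
        have := (Real.self_le_sinh_iff (x := -x)).2 (by linarith)
        have h2 : Real.sinh (-x) = - Real.sinh x := Real.sinh_neg x
        linarith [h2 ▸ this]
      rw [le_div_iff_of_neg hneg, one_mul]
      exact h1
    · rw [le_div_iff₀ hpos, one_mul]
      exact (Real.self_le_sinh_iff).2 hpos.le

lemma one_le_wt {n : ℕ} (t : ℝ) (k : Fin n → ℤ) : 1 ≤ wt t k := by
  unfold wt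
  calc (1:ℝ) = ∏ _i : Fin n, (1:ℝ) := by simp
  _ ≤ ∏ i, sr (t * (k i : ℝ)) :=
    Finset.prod_le_prod (fun i _ => zero_le_one) (fun i _ => one_le_sr' _)

def Box (n K : ℕ) : Finset (Fin n → ℤ) := Finset.Icc (fun _ => -(K:ℤ)) (fun _ => (K:ℤ))

lemma mem_Box {n K : ℕ} {k : Fin n → ℤ} (h : l1 k ≤ (K:ℝ)) : k ∈ Box n K := by
  have habs : ∀ i, |k i| ≤ (K:ℤ) := by
    intro i
    have hi : |(k i : ℝ)| ≤ (K:ℝ) := by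
      refine le_trans ?_ h
      exact Finset.single_le_sum (f := fun j => |(k j : ℝ)|) (fun j _ => abs_nonneg _)
        (Finset.mem_univ i)
    exact_mod_cast hi
  refine Finset.mem_Icc.2 ⟨fun i => ?_, fun i => ?_⟩
  · exact neg_le_of_abs_le (habs i)
  · exact le_of_abs_le (habs i)


set_option maxHeartbeats 2000000 in
theorem small_divisor_estimate (n K : ℕ) (hK : 1 ≤ K) (s : ℝ) (hs : 0 ≤ s)
    (ω : Fin n → ℝ) (Ω : ℝ)
    (hres : ∀ k : Fin n → ℤ, 0 < l1 k → l1 k ≤ K → (∑ i, (k i : ℝ) * ω i) ≠ 0)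
    (hΩ : ∀ k : Fin n → ℤ, 0 < l1 k → l1 k ≤ K → |∑ i, (k i : ℝ) * ω i|⁻¹ ≤ Ω)
    (c : (Fin n → ℤ) → ℂ)
    (hsupp : ∀ k, c k ≠ 0 → 0 < l1 k ∧ l1 k ≤ K) :
    wiener (fun k => if 0 < l1 k ∧ l1 k ≤ K then
        c k / (Complex.I * ((∑ i, (k i : ℝ) * ω i : ℝ) : ℂ)) else 0) s
      ≤ (2 : ℝ) ^ (n + 1) * Real.exp (s * K) * Ω * stripL2 c s := by
  classical
  have hres' : ∀ k : Fin n → ℤ, 0 < l1 k → l1 k ≤ (K:ℝ) → dd ω k ≠ 0 := hres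
  have hΩ' : ∀ k : Fin n → ℤ, 0 < l1 k → l1 k ≤ (K:ℝ) → |dd ω k|⁻¹ ≤ Ω := hΩ
  set A := (Box n K).filter (fun k => 0 < l1 k ∧ l1 k ≤ (K:ℝ)) with hAdef
  have hPBox : ∀ k : Fin n → ℤ, (0 < l1 k ∧ l1 k ≤ (K:ℝ)) → k ∈ Box n K := fun k hk =>
    mem_Box hk.2
  have hPA : ∀ k : Fin n → ℤ, (0 < l1 k ∧ l1 k ≤ (K:ℝ)) → k ∈ A := fun k hk =>
    Finset.mem_filter.2 ⟨hPBox k hk, hk⟩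
  have hwiener : wiener (fun k => if 0 < l1 k ∧ l1 k ≤ (K:ℝ) then
      c k / (Complex.I * ((∑ i, (k i : ℝ) * ω i : ℝ) : ℂ)) else 0) s
      = ∑ k ∈ A, ‖c k‖ * |dd ω k|⁻¹ * Real.exp (s * l1 k) := by
    unfold wiener
    rw [tsum_eq_sum (s := Box n K)
      (by
        intro k hk
        beta_reduce
        rw [if_neg (fun hP => hk (hPBox k hP))]
        simp)]
    rw [hAdef, Finset.sum_filter]
    refine Finset.sum_congr rfl fun k _ => ?_
    beta_reduce
    split_ifs with hP
    · rw [norm_div, norm_mul, Complex.norm_I, Complex.norm_real, Real.norm_eq_abs, one_mul,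
        div_eq_mul_inv]
      rfl
    · simp
  have hstrip : stripL2 c s = Real.sqrt (∑ k ∈ Box n K, ‖c k‖^2 * wt (2*s) k) := by
    unfold stripL2
    congr 1
    refine tsum_eq_sum fun k hk => ?_
    have hc : c k = 0 := by
      by_contra hc
      exact hk (hPBox k (hsupp k hc))
    rw [hc]
    simp
  rw [hwiener, hstrip]
  rcases A.eq_empty_or_nonempty with hAe | ⟨k₁, hk₁⟩
  · rw [hAe]
    simp only [Finset.sum_empty]
    have hz : ∑ k ∈ Box n K, ‖c k‖^2 * wt (2*s) k = 0 := by
      refine Finset.sum_eq_zero fun k _ => ?_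
      have hc : c k = 0 := by
        by_contra hc
        have hmem := hPA k (hsupp k hc)
        rw [hAe] at hmem
        exact absurd hmem (Finset.notMem_empty k)
      rw [hc]
      simp
    rw [hz, Real.sqrt_zero, mul_zero]
  · have hP₁ := (Finset.mem_filter.1 hk₁).2
    have hd₁ : dd ω k₁ ≠ 0 := hres' k₁ hP₁.1 hP₁.2
    have hΩpos : 0 < Ω := lt_of_lt_of_le (inv_pos.2 (abs_pos.2 hd₁)) (hΩ' k₁ hP₁.1 hP₁.2)
    set S := ∑ k ∈ Box n K, ‖c k‖^2 * wt (2*s) k with hSdef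
    have hwtnn : ∀ k : Fin n → ℤ, (0:ℝ) ≤ wt (2*s) k := fun k =>
      le_trans zero_le_one (one_le_wt _ _)
    have hSnn : 0 ≤ S := Finset.sum_nonneg fun k _ => mul_nonneg (by positivity) (hwtnn k)
    set E := Real.exp (s * K) with hEdef
    have hEpos : 0 < E := Real.exp_pos _
    set W : (Fin n → ℤ) → ℝ := fun k => Real.sqrt (wt (2*s) k) with hWdef
    have hWpos : ∀ k, 0 < W k := fun k =>
      Real.sqrt_pos.2 (lt_of_lt_of_le one_pos (one_le_wt _ _))
    have hWsq : ∀ k, W k ^ 2 = wt (2*s) k := fun k => Real.sq_sqrt (hwtnn k)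
    have hsummand : ∀ k, ‖c k‖ * |dd ω k|⁻¹ * Real.exp (s * l1 k)
        = (‖c k‖ * W k) * (|dd ω k|⁻¹ * Real.exp (s * l1 k) / W k) := by
      intro k
      have hWne : W k ≠ 0 := (hWpos k).ne'
      have hr : (‖c k‖ * W k) * (|dd ω k|⁻¹ * Real.exp (s * l1 k) / W k)
          = (‖c k‖ * |dd ω k|⁻¹ * Real.exp (s * l1 k)) * (W k / W k) := by ring
      rw [hr, div_self hWne, mul_one]
    have hCS := Finset.sum_mul_sq_le_sq_mul_sq A (fun k => ‖c k‖ * W k)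
      (fun k => |dd ω k|⁻¹ * Real.exp (s * l1 k) / W k)
    have h1 : ∑ k ∈ A, (‖c k‖ * W k)^2 ≤ S := by
      calc ∑ k ∈ A, (‖c k‖ * W k)^2 = ∑ k ∈ A, ‖c k‖^2 * wt (2*s) k :=
            Finset.sum_congr rfl fun k _ => by rw [mul_pow, hWsq]
      _ ≤ S := Finset.sum_le_sum_of_subset_of_nonneg (Finset.filter_subset _ _)
            (fun k _ _ => mul_nonneg (by positivity) (hwtnn k))
    have h2 : ∑ k ∈ A, (|dd ω k|⁻¹ * Real.exp (s * l1 k) / W k)^2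
        ≤ E^2 * (4 * 3^n * Ω^2) := by
      have hterm : ∀ k ∈ A, (|dd ω k|⁻¹ * Real.exp (s * l1 k) / W k)^2
          ≤ (|dd ω k|^2)⁻¹ * E^2 := by
        intro k hk
        have hPk := (Finset.mem_filter.1 hk).2
        have hw1 : 1 ≤ W k ^ 2 := by rw [hWsq]; exact one_le_wt _ _
        have hexp : Real.exp (s * l1 k)^2 ≤ E^2 := by
          apply pow_le_pow_left₀ (Real.exp_pos _).le
          rw [hEdef]
          exact Real.exp_le_exp.2 (mul_le_mul_of_nonneg_left hPk.2 hs)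
        calc (|dd ω k|⁻¹ * Real.exp (s * l1 k) / W k)^2
            = (|dd ω k|⁻¹^2 * Real.exp (s * l1 k)^2) / W k ^2 := by
              rw [div_pow, mul_pow]
        _ ≤ |dd ω k|⁻¹^2 * Real.exp (s * l1 k)^2 :=
              div_le_self (by positivity) hw1
        _ ≤ |dd ω k|⁻¹^2 * E^2 :=
              mul_le_mul_of_nonneg_left hexp (by positivity)
        _ = (|dd ω k|^2)⁻¹ * E^2 := by rw [inv_pow]
      calc ∑ k ∈ A, (|dd ω k|⁻¹ * Real.exp (s * l1 k) / W k)^2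
          ≤ ∑ k ∈ A, (|dd ω k|^2)⁻¹ * E^2 := Finset.sum_le_sum hterm
      _ = E^2 * ∑ k ∈ A, (|dd ω k|^2)⁻¹ := by rw [← Finset.sum_mul, mul_comm]
      _ ≤ E^2 * (4 * 3^n * Ω^2) := by
          refine mul_le_mul_of_nonneg_left ?_ (by positivity)
          exact russmann hres' hΩ' A (fun k hk => (Finset.mem_filter.1 hk).2)
    have hvnn : 0 ≤ ∑ k ∈ A, (|dd ω k|⁻¹ * Real.exp (s * l1 k) / W k)^2 :=
      Finset.sum_nonneg fun k _ => sq_nonneg _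
    have hLHSnn : 0 ≤ ∑ k ∈ A, ‖c k‖ * |dd ω k|⁻¹ * Real.exp (s * l1 k) :=
      Finset.sum_nonneg fun k _ => mul_nonneg
        (mul_nonneg (norm_nonneg _) (inv_nonneg.2 (abs_nonneg _))) (Real.exp_pos _).le
    have hRHSnn : 0 ≤ (2:ℝ)^(n+1) * E * Ω * Real.sqrt S :=
      mul_nonneg (mul_nonneg (mul_nonneg (by positivity) hEpos.le) hΩpos.le)
        (Real.sqrt_nonneg _)
    have hsq : (∑ k ∈ A, ‖c k‖ * |dd ω k|⁻¹ * Real.exp (s * l1 k))^2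
        ≤ ((2:ℝ)^(n+1) * E * Ω * Real.sqrt S)^2 := by
      have hrw : ∑ k ∈ A, ‖c k‖ * |dd ω k|⁻¹ * Real.exp (s * l1 k)
          = ∑ k ∈ A, (‖c k‖ * W k) * (|dd ω k|⁻¹ * Real.exp (s * l1 k) / W k) :=
        Finset.sum_congr rfl fun k _ => hsummand k
      rw [hrw]
      have hsqRHS : ((2:ℝ)^(n+1) * E * Ω * Real.sqrt S)^2 = 4 * (4:ℝ)^n * E^2 * Ω^2 * S := by
        rw [mul_pow, mul_pow, mul_pow, Real.sq_sqrt hSnn]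
        have h24 : ((2:ℝ)^(n+1))^2 = 4 * (4:ℝ)^n := by
          rw [← pow_mul]
          rw [show (n+1)*2 = 2 + 2*n by ring]
          rw [pow_add, pow_mul]
          norm_num
        rw [h24]
      rw [hsqRHS]
      calc (∑ k ∈ A, (‖c k‖ * W k) * (|dd ω k|⁻¹ * Real.exp (s * l1 k) / W k))^2
          ≤ (∑ k ∈ A, (‖c k‖ * W k)^2) *
            (∑ k ∈ A, (|dd ω k|⁻¹ * Real.exp (s * l1 k) / W k)^2) := hCS
      _ ≤ S * (E^2 * (4 * 3^n * Ω^2)) := by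
          refine mul_le_mul h1 h2 hvnn hSnn
      _ ≤ 4 * (4:ℝ)^n * E^2 * Ω^2 * S := by
          have h34 : (3:ℝ)^n ≤ (4:ℝ)^n := pow_le_pow_left₀ (by norm_num) (by norm_num) n
          have hfac : (0:ℝ) ≤ 4 * (S * (E^2 * Ω^2)) := by positivity
          nlinarith [mul_le_mul_of_nonneg_left h34 hfac]
    calc ∑ k ∈ A, ‖c k‖ * |dd ω k|⁻¹ * Real.exp (s * l1 k)
        = Real.sqrt ((∑ k ∈ A, ‖c k‖ * |dd ω k|⁻¹ * Real.exp (s * l1 k))^2) :=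
          (Real.sqrt_sq hLHSnn).symm
      _ ≤ Real.sqrt (((2:ℝ)^(n+1) * E * Ω * Real.sqrt S)^2) := Real.sqrt_le_sqrt hsq
      _ = (2:ℝ)^(n+1) * E * Ω * Real.sqrt S := Real.sqrt_sq hRHSnn
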